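/- Fix n workers with losses f_i : ℝ^d → ℝ (each L-smooth), f := (1/n)Σ f_i, stochastic gradient oracles with variance bound σ_i² and second-moment bound G², and stepsize η > 0. Fix points x₁, …, x_n ∈ ℝ^d with average x̄ := (1/n)Σ x_i, and let ξ₁ ∼ D₁, …, ξ_n ∼ D_n be independent. Then E[f(x̄ − (η/n)·Σ_{i=1}^n ∇F_i(x_i, ξ_i))] ≤ f(x̄) − η·(1/2 − η·L)·‖∇f(x̄)‖² + (η·L²/2 + η²·L³)·(1/n)·Σ_{i=1}^n ‖x̄ − x_i‖² + L·η²·σ̄²/(2n), where σ̄² := (1/n)Σ σ_i². -/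

import Mathlib

open MeasureTheory

noncomputable section AuxOneStep

section Analysis

variable {E : Type*} [NormedAddCommGroup E] [InnerProductSpace ℝ E] [CompleteSpace E]

local notation "⟪" x ", " y "⟫" => @inner ℝ _ _ x y

lemma aux_hasGradientAt_avg {ι : Type*} (s : Finset ι) (f : ι → E → ℝ)
    (hdiff : ∀ i, Differentiable ℝ (f i)) (c : ℝ) (z : E) :
    HasGradientAt (fun y => c * ∑ i ∈ s, f i y) (c • ∑ i ∈ s, gradient (f i) z) z := by
  have h1 : HasFDerivAt (fun y => ∑ i ∈ s, f i y) (∑ i ∈ s, fderiv ℝ (f i) z) z :=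
    HasFDerivAt.fun_sum fun i _ => (hdiff i z).hasFDerivAt
  have h2 := h1.const_mul c
  have h3 := h2.hasGradientAt
  have : (InnerProductSpace.toDual ℝ E).symm (c • ∑ i ∈ s, fderiv ℝ (f i) z)
      = c • ∑ i ∈ s, gradient (f i) z := by
    simp only [_root_.map_smul, map_sum, gradient]
  rwa [this] at h3

lemma aux_descent (f : E → ℝ) (hf : Differentiable ℝ f) {L : ℝ} (hL : 0 ≤ L)
    (hlip : ∀ a b : E, ‖gradient f b - gradient f a‖ ≤ L * ‖b - a‖) (x y : E) :
    |f y - f x - ⟪gradient f x, y - x⟫| ≤ L / 2 * ‖y - x‖ ^ 2 := by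
  set v := y - x with hv
  have hcont : Continuous (gradient f) := by
    have : LipschitzWith (Real.toNNReal L) (gradient f) := by
      refine LipschitzWith.of_dist_le_mul fun a b => ?_
      rw [dist_eq_norm, dist_eq_norm, Real.coe_toNNReal L hL]
      exact hlip b a
    exact this.continuous
  have hderiv : ∀ t : ℝ, HasDerivAt (fun s : ℝ => f (x + s • v))
      (⟪gradient f (x + t • v), v⟫) t := by
    intro t
    have h1 : HasFDerivAt f (InnerProductSpace.toDual ℝ E (gradient f (x + t • v)))
        (x + t • v) := (hf (x + t • v)).hasGradientAt.hasFDerivAt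
    have h2 : HasDerivAt (fun s : ℝ => x + s • v) v t := by
      simpa using ((hasDerivAt_id t).smul_const v).const_add x
    simpa [InnerProductSpace.toDual_apply_apply, Function.comp_def] using h1.comp_hasDerivAt t h2
  have hgc : Continuous fun t : ℝ => (⟪gradient f (x + t • v), v⟫ : ℝ) := by
    exact (hcont.comp (by continuity)).inner continuous_const
  have hint : IntervalIntegrable (fun t : ℝ => (⟪gradient f (x + t • v), v⟫ : ℝ))
      MeasureTheory.volume 0 1 := hgc.intervalIntegrable 0 1
  have hFTC : ∫ t in (0:ℝ)..1, (⟪gradient f (x + t • v), v⟫ : ℝ) = f y - f x := by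
    have := intervalIntegral.integral_eq_sub_of_hasDerivAt
      (f := fun s : ℝ => f (x + s • v)) (fun t _ => hderiv t) hint
    simpa [hv] using this
  have hsplit : f y - f x - ⟪gradient f x, v⟫
      = ∫ t in (0:ℝ)..1, ((⟪gradient f (x + t • v), v⟫ : ℝ) - ⟪gradient f x, v⟫) := by
    rw [intervalIntegral.integral_sub hint intervalIntegrable_const, hFTC,
      intervalIntegral.integral_const]
    simp
  have hb : ∀ t ∈ Set.Icc (0:ℝ) 1,
      |(⟪gradient f (x + t • v), v⟫ : ℝ) - ⟪gradient f x, v⟫| ≤ (L * ‖v‖ ^ 2) * t := by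
    intro t ht
    rw [← inner_sub_left]
    calc |(⟪gradient f (x + t • v) - gradient f x, v⟫ : ℝ)|
        ≤ ‖gradient f (x + t • v) - gradient f x‖ * ‖v‖ := abs_real_inner_le_norm _ _
      _ ≤ (L * ‖x + t • v - x‖) * ‖v‖ :=
          mul_le_mul_of_nonneg_right (hlip x (x + t • v)) (norm_nonneg v)
      _ = (L * ‖v‖ ^ 2) * t := by
          rw [add_sub_cancel_left, norm_smul, Real.norm_eq_abs, abs_of_nonneg ht.1]
          ring
  have habs : |f y - f x - ⟪gradient f x, v⟫| ≤ L * ‖v‖ ^ 2 / 2 := by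
    rw [hsplit]
    calc |∫ t in (0:ℝ)..1, ((⟪gradient f (x + t • v), v⟫ : ℝ) - ⟪gradient f x, v⟫)|
        ≤ ∫ t in (0:ℝ)..1, |(⟪gradient f (x + t • v), v⟫ : ℝ) - ⟪gradient f x, v⟫| :=
          intervalIntegral.abs_integral_le_integral_abs zero_le_one
      _ ≤ ∫ t in (0:ℝ)..1, (L * ‖v‖ ^ 2) * t := by
          refine intervalIntegral.integral_mono_on zero_le_one
            ((hint.sub intervalIntegrable_const).abs) ?_ hb
          exact (continuous_const.mul continuous_id).intervalIntegrable 0 1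
      _ = L * ‖v‖ ^ 2 / 2 := by
          rw [intervalIntegral.integral_const_mul, integral_id]
          ring
  calc |f y - f x - ⟪gradient f x, v⟫| ≤ L * ‖v‖ ^ 2 / 2 := habs
    _ = L / 2 * ‖v‖ ^ 2 := by ring

lemma aux_norm_sum_sq {ι : Type*} (s : Finset ι) (v : ι → E) :
    ‖∑ i ∈ s, v i‖ ^ 2 ≤ (s.card : ℝ) * ∑ i ∈ s, ‖v i‖ ^ 2 := by
  calc ‖∑ i ∈ s, v i‖ ^ 2 ≤ (∑ i ∈ s, ‖v i‖) ^ 2 := by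
        have := norm_sum_le s v
        nlinarith [norm_nonneg (∑ i ∈ s, v i)]
    _ ≤ (s.card : ℝ) * ∑ i ∈ s, ‖v i‖ ^ 2 := by
        exact_mod_cast sq_sum_le_card_mul_sum_sq (s := s) (f := fun i => ‖v i‖)

end Analysis



section AuxMeas

variable {n : ℕ} {Ξ : Fin n → Type} [∀ i, MeasurableSpace (Ξ i)]
  (μ : ∀ i, Measure (Ξ i)) [∀ i, IsProbabilityMeasure (μ i)]

lemma aux_mp_eval (i : Fin n) :
    MeasurePreserving (Function.eval i) (Measure.pi μ) (μ i) := by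
  classical
  refine ⟨measurable_pi_apply i, ?_⟩
  ext s hs
  rw [Measure.map_apply (measurable_pi_apply i) hs, Set.eval_preimage, Measure.pi_pi]
  rw [Finset.prod_eq_single i]
  · simp
  · intro k _ hk; simp [Function.update_of_ne hk]
  · simp

lemma aux_integral_eval {𝔼 : Type*} [NormedAddCommGroup 𝔼] [NormedSpace ℝ 𝔼]
    (i : Fin n) (φ : Ξ i → 𝔼) (hφ : AEStronglyMeasurable φ (μ i)) :
    ∫ ξ, φ (ξ i) ∂Measure.pi μ = ∫ a, φ a ∂μ i := by
  have h := (aux_mp_eval μ i).map_eq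
  rw [← h, integral_map (measurable_pi_apply i).aemeasurable (h.symm ▸ hφ)]

lemma aux_integrable_eval {𝔼 : Type*} [NormedAddCommGroup 𝔼] [NormedSpace ℝ 𝔼]
    (i : Fin n) (φ : Ξ i → 𝔼) (hφ : Integrable φ (μ i)) :
    Integrable (fun ξ => φ (ξ i)) (Measure.pi μ) := by
  have := (memLp_one_iff_integrable.mpr hφ).comp_measurePreserving (aux_mp_eval μ i)
  exact memLp_one_iff_integrable.mp this

lemma aux_mp_pair {i j : Fin n} (hij : i ≠ j) :
    MeasurePreserving (fun ξ : ∀ k, Ξ k => (ξ i, ξ j)) (Measure.pi μ) ((μ i).prod (μ j)) := by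
  classical
  refine ⟨(measurable_pi_apply i).prodMk (measurable_pi_apply j), ?_⟩
  symm
  refine Measure.prod_eq fun s t hs ht => ?_
  rw [Measure.map_apply ((measurable_pi_apply i).prodMk (measurable_pi_apply j)) (hs.prod ht)]
  have hpre : (fun ξ : ∀ k, Ξ k => (ξ i, ξ j)) ⁻¹' (s ×ˢ t)
      = Set.pi Set.univ (Function.update (Function.update (fun k => (Set.univ : Set (Ξ k))) i s) j t) := by
    ext ξ
    simp only [Set.mem_preimage, Set.mem_prod, Set.mem_pi, Set.mem_univ, true_implies]
    constructor
    · rintro ⟨h1, h2⟩ k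
      rcases eq_or_ne k j with rfl | hkj
      · simpa using h2
      rcases eq_or_ne k i with rfl | hki
      · simpa [Function.update_of_ne hkj, Function.update_of_ne hij] using h1
      · simp [Function.update_of_ne hkj, Function.update_of_ne hki]
    · intro h
      refine ⟨?_, ?_⟩
      · have := h i
        simpa [Function.update_of_ne hij] using this
      · have := h j
        simpa using this
  rw [hpre, Measure.pi_pi]
  have hji : j ≠ i := hij.symm
  rw [← Finset.mul_prod_erase Finset.univ _ (Finset.mem_univ i)]
  have hjmem : j ∈ Finset.univ.erase i := Finset.mem_erase.mpr ⟨hji, Finset.mem_univ j⟩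
  rw [← Finset.mul_prod_erase _ _ hjmem]
  have hrest : ∀ k ∈ (Finset.univ.erase i).erase j,
      μ k (Function.update (Function.update (fun k => (Set.univ : Set (Ξ k))) i s) j t k) = 1 := by
    intro k hk
    rcases Finset.mem_erase.mp hk with ⟨hkj, hk'⟩
    rcases Finset.mem_erase.mp hk' with ⟨hki, -⟩
    simp [Function.update_of_ne hkj, Function.update_of_ne hki]
  rw [Finset.prod_eq_one hrest]
  simp [Function.update_of_ne hij, mul_comm]

lemma aux_integrable_pair {i j : Fin n} (hij : i ≠ j) (φ : Ξ i → ℝ) (ψ : Ξ j → ℝ)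
    (hφ : Integrable φ (μ i)) (hψ : Integrable ψ (μ j)) :
    Integrable (fun ξ : ∀ k, Ξ k => φ (ξ i) * ψ (ξ j)) (Measure.pi μ) := by
  have h := (memLp_one_iff_integrable.mpr (hφ.mul_prod hψ)).comp_measurePreserving
    (aux_mp_pair μ hij)
  exact memLp_one_iff_integrable.mp h

lemma aux_integral_pair {i j : Fin n} (hij : i ≠ j) (φ : Ξ i → ℝ) (ψ : Ξ j → ℝ)
    (hφ : Integrable φ (μ i)) (hψ : Integrable ψ (μ j)) :
    ∫ ξ, φ (ξ i) * ψ (ξ j) ∂Measure.pi μ = (∫ a, φ a ∂μ i) * ∫ a, ψ a ∂μ j := by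
  have hmp := aux_mp_pair μ hij
  have h := hmp.map_eq
  have hsm : AEStronglyMeasurable (fun p : Ξ i × Ξ j => φ p.1 * ψ p.2)
      ((Measure.pi μ).map (fun ξ : ∀ k, Ξ k => (ξ i, ξ j))) :=
    h.symm ▸ (hφ.mul_prod hψ).aestronglyMeasurable
  calc ∫ ξ, φ (ξ i) * ψ (ξ j) ∂Measure.pi μ
      = ∫ p, φ p.1 * ψ p.2 ∂((μ i).prod (μ j)) := by
        rw [← h, integral_map hmp.measurable.aemeasurable hsm]
    _ = (∫ a, φ a ∂μ i) * ∫ a, ψ a ∂μ j := integral_prod_mul φ ψ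

end AuxMeas

end AuxOneStep

set_option maxHeartbeats 1000000 in
/-- One-step descent inequality (from the proof of Theorem 5 of the paper):
for `n` workers with `L`-smooth losses `f_i`, independent stochastic gradient
oracles `G i` with variance bound `σ_i²` and second-moment bound `Gbd²`, and
points `x_1, …, x_n` with average `x̄`,
`E f(x̄ − (η/n)·Σ_i G_i(x_i, ξ_i)) ≤ f(x̄) − η(1/2 − ηL)‖∇f(x̄)‖²
  + (ηL²/2 + η²L³)(1/n)Σ_i ‖x̄ − x_i‖² + Lη²σ̄²/(2n)`. -/
theorem one_step_descent
    (n d : ℕ) (hn : 0 < n)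
    (Ξ : Fin n → Type) [∀ i, MeasurableSpace (Ξ i)]
    (μ : ∀ i, Measure (Ξ i)) [∀ i, IsProbabilityMeasure (μ i)]
    (f : Fin n → EuclideanSpace ℝ (Fin d) → ℝ)
    (L : ℝ) (hL : 0 ≤ L)
    (hdiff : ∀ i, Differentiable ℝ (f i))
    (hsmooth : ∀ i, ∀ x y : EuclideanSpace ℝ (Fin d),
      ‖gradient (f i) y - gradient (f i) x‖ ≤ L * ‖y - x‖)
    (G : ∀ i : Fin n, EuclideanSpace ℝ (Fin d) → Ξ i → EuclideanSpace ℝ (Fin d))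
    (hGmeas : ∀ i, Measurable (Function.uncurry (G i)))
    (hGint : ∀ i x, MemLp (G i x) 2 (μ i))
    (σ : Fin n → ℝ) (Gbd : ℝ)
    (hunbiased : ∀ i x, ∫ ξ, G i x ξ ∂(μ i) = gradient (f i) x)
    (hvar : ∀ i x, ∫ ξ, ‖G i x ξ - gradient (f i) x‖ ^ 2 ∂(μ i) ≤ σ i ^ 2)
    (hsecond : ∀ i x, ∫ ξ, ‖G i x ξ‖ ^ 2 ∂(μ i) ≤ Gbd ^ 2)
    (η : ℝ) (hη : 0 < η)
    (x : Fin n → EuclideanSpace ℝ (Fin d)) :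
    ∫ ξ, (n : ℝ)⁻¹ * ∑ i, f i
          (((n : ℝ)⁻¹ • ∑ j, x j) - (η / n) • ∑ i, G i (x i) (ξ i))
        ∂(Measure.pi μ)
      ≤ (n : ℝ)⁻¹ * ∑ i, f i ((n : ℝ)⁻¹ • ∑ j, x j)
        - η * (1 / 2 - η * L) *
          ‖gradient (fun y => (n : ℝ)⁻¹ * ∑ i, f i y) ((n : ℝ)⁻¹ • ∑ j, x j)‖ ^ 2
        + (η * L ^ 2 / 2 + η ^ 2 * L ^ 3) *
          ((n : ℝ)⁻¹ * ∑ i, ‖((n : ℝ)⁻¹ • ∑ j, x j) - x i‖ ^ 2)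
        + L * η ^ 2 * ((n : ℝ)⁻¹ * ∑ i, σ i ^ 2) / (2 * n) := by
    classical
  have hn' : (0:ℝ) < n := by exact_mod_cast hn
  set xb : EuclideanSpace ℝ (Fin d) := (n : ℝ)⁻¹ • ∑ j, x j with hxb
  -- gradient facts for the average function
  have hgradF : ∀ z, gradient (fun y => (n : ℝ)⁻¹ * ∑ i, f i y) z
      = (n:ℝ)⁻¹ • ∑ i, gradient (f i) z :=
    fun z => (aux_hasGradientAt_avg Finset.univ f hdiff ((n:ℝ)⁻¹) z).gradient
  have hFdiff : Differentiable ℝ (fun y => (n : ℝ)⁻¹ * ∑ i, f i y) :=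
    fun z => (aux_hasGradientAt_avg Finset.univ f hdiff ((n:ℝ)⁻¹) z).differentiableAt
  have hFlip : ∀ a b, ‖gradient (fun y => (n : ℝ)⁻¹ * ∑ i, f i y) b
      - gradient (fun y => (n : ℝ)⁻¹ * ∑ i, f i y) a‖ ≤ L * ‖b - a‖ := by
    intro a b
    rw [hgradF, hgradF, ← smul_sub, ← Finset.sum_sub_distrib, norm_smul]
    have h1 : ‖∑ i, (gradient (f i) b - gradient (f i) a)‖ ≤ (n : ℝ) * (L * ‖b - a‖) := by
      refine (norm_sum_le _ _).trans ?_
      calc ∑ i : Fin n, ‖gradient (f i) b - gradient (f i) a‖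
          ≤ ∑ _i : Fin n, L * ‖b - a‖ := Finset.sum_le_sum fun i _ => hsmooth i a b
        _ = (n:ℝ) * (L * ‖b - a‖) := by
            simp [Finset.sum_const, nsmul_eq_mul]
    calc ‖(n:ℝ)⁻¹‖ * ‖∑ i, (gradient (f i) b - gradient (f i) a)‖
        ≤ (n:ℝ)⁻¹ * ((n:ℝ) * (L * ‖b - a‖)) := by
          rw [Real.norm_eq_abs, abs_of_nonneg (by positivity)]
          exact mul_le_mul_of_nonneg_left h1 (by positivity)
      _ = L * ‖b - a‖ := by field_simp
  -- basic facts about the stochastic gradients at the points x i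
  have hgmeas : ∀ i, Measurable (G i (x i)) := fun i =>
    (hGmeas i).comp (measurable_const.prodMk measurable_id)
  have hgint : ∀ i, Integrable (G i (x i)) (μ i) := fun i =>
    (hGint i (x i)).integrable one_le_two
  have hgsq : ∀ i, Integrable (fun a => ‖G i (x i) a‖ ^ 2) (μ i) := fun i =>
    ((hGint i (x i)).norm).integrable_sq
  have hΔmem : ∀ i, MemLp (fun a => G i (x i) a - gradient (f i) (x i)) 2 (μ i) := fun i =>
    (hGint i (x i)).sub (memLp_const _)
  have hΔint : ∀ i, Integrable (fun a => G i (x i) a - gradient (f i) (x i)) (μ i) := fun i =>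
    (hΔmem i).integrable one_le_two
  have hΔmean : ∀ i, ∫ a, (G i (x i) a - gradient (f i) (x i)) ∂μ i = 0 := by
    intro i
    rw [integral_sub (hgint i) (integrable_const _), hunbiased i (x i), integral_const]
    simp
  have hΔsq : ∀ i, Integrable (fun a => ‖G i (x i) a - gradient (f i) (x i)‖ ^ 2) (μ i) :=
    fun i => ((hΔmem i).norm).integrable_sq
  set S : (∀ k, Ξ k) → EuclideanSpace ℝ (Fin d) :=
    fun ξ => (n:ℝ)⁻¹ • ∑ i, G i (x i) (ξ i) with hSdef
  set hb : EuclideanSpace ℝ (Fin d) := (n:ℝ)⁻¹ • ∑ i, gradient (f i) (x i) with hhb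
  set gb : EuclideanSpace ℝ (Fin d) :=
    gradient (fun y => (n : ℝ)⁻¹ * ∑ i, f i y) xb with hgb
  have hSmeas : Measurable S := by
    apply Measurable.fun_const_smul
    exact Finset.measurable_fun_sum _ fun i _ => (hgmeas i).comp (measurable_pi_apply i)
  -- pointwise descent bound
  have hdesc : ∀ ξ : ∀ k, Ξ k,
      |(n : ℝ)⁻¹ * ∑ i, f i (xb - η • S ξ) - (n : ℝ)⁻¹ * ∑ i, f i xb
        + η * (inner ℝ gb (S ξ) : ℝ)| ≤ L / 2 * (η ^ 2 * ‖S ξ‖ ^ 2) := by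
    intro ξ
    have h := aux_descent (fun y => (n : ℝ)⁻¹ * ∑ i, f i y) hFdiff hL hFlip xb (xb - η • S ξ)
    rw [← hgb] at h
    have h1 : xb - η • S ξ - xb = -(η • S ξ) := by abel
    rw [h1, inner_neg_right, real_inner_smul_right, norm_neg, norm_smul, mul_pow,
      Real.norm_eq_abs, sq_abs, sub_neg_eq_add] at h
    exact h
  set R : (∀ k, Ξ k) → ℝ := fun ξ => (n : ℝ)⁻¹ * ∑ i, f i (xb - η • S ξ)
      - (n : ℝ)⁻¹ * ∑ i, f i xb + η * (inner ℝ gb (S ξ) : ℝ) with hRdef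
  -- integrability of the linear terms
  have hinner_int : ∀ (c : EuclideanSpace ℝ (Fin d)) i,
      Integrable (fun ξ : ∀ k, Ξ k => (inner ℝ c (G i (x i) (ξ i)) : ℝ)) (Measure.pi μ) :=
    fun c i => aux_integrable_eval μ i (fun a => (inner ℝ c (G i (x i) a) : ℝ)) ((hgint i).const_inner c)
  have hSinner_eq : ∀ c : EuclideanSpace ℝ (Fin d), (fun ξ => (inner ℝ c (S ξ) : ℝ))
      = fun ξ : ∀ k, Ξ k => (n:ℝ)⁻¹ * ∑ i, (inner ℝ c (G i (x i) (ξ i)) : ℝ) := by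
    intro c
    funext ξ
    rw [hSdef, real_inner_smul_right, inner_sum]
  have hSinner_int : ∀ c : EuclideanSpace ℝ (Fin d),
      Integrable (fun ξ => (inner ℝ c (S ξ) : ℝ)) (Measure.pi μ) := by
    intro c
    rw [hSinner_eq c]
    exact (integrable_finset_sum _ fun i _ => hinner_int c i).const_mul _
  have hSinner_val : ∀ c : EuclideanSpace ℝ (Fin d),
      ∫ ξ, (inner ℝ c (S ξ) : ℝ) ∂Measure.pi μ = (inner ℝ c hb : ℝ) := by
    intro c
    rw [hSinner_eq c, integral_const_mul,
      integral_finset_sum _ fun i _ => hinner_int c i]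
    have : ∀ i : Fin n, ∫ ξ, (inner ℝ c (G i (x i) (ξ i)) : ℝ) ∂Measure.pi μ
        = (inner ℝ c (gradient (f i) (x i)) : ℝ) := by
      intro i
      rw [aux_integral_eval μ i (fun a => (inner ℝ c (G i (x i) a) : ℝ))
          ((hgint i).const_inner c).aestronglyMeasurable,
        integral_inner (hgint i) c, hunbiased i (x i)]
    rw [Finset.sum_congr rfl fun i _ => this i, hhb, real_inner_smul_right, inner_sum]
  -- integrability of ‖S‖²
  have hgsq_pi : ∀ i, Integrable (fun ξ : ∀ k, Ξ k => ‖G i (x i) (ξ i)‖ ^ 2) (Measure.pi μ) :=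
    fun i => aux_integrable_eval μ i _ (hgsq i)
  have hSsq_int : Integrable (fun ξ => ‖S ξ‖ ^ 2) (Measure.pi μ) := by
    refine Integrable.mono'
      ((integrable_finset_sum (μ := Measure.pi μ) Finset.univ fun i _ => hgsq_pi i).const_mul ((n:ℝ)⁻¹))
      ((hSmeas.norm.pow_const 2).aestronglyMeasurable) ?_
    refine Filter.Eventually.of_forall fun ξ => ?_
    rw [Real.norm_eq_abs, abs_of_nonneg (by positivity)]
    have h1 : ‖S ξ‖ ^ 2 = ((n:ℝ)⁻¹)^2 * ‖∑ i, G i (x i) (ξ i)‖^2 := by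
      rw [hSdef, norm_smul, mul_pow, Real.norm_eq_abs, sq_abs]
    have h2 := aux_norm_sum_sq (Finset.univ) (fun i => G i (x i) (ξ i))
    rw [Finset.card_univ, Fintype.card_fin] at h2
    rw [h1]
    calc ((n:ℝ)⁻¹)^2 * ‖∑ i, G i (x i) (ξ i)‖^2
        ≤ ((n:ℝ)⁻¹)^2 * ((n:ℝ) * ∑ i, ‖G i (x i) (ξ i)‖^2) := by
          exact mul_le_mul_of_nonneg_left h2 (by positivity)
      _ = (n:ℝ)⁻¹ * ∑ i, ‖G i (x i) (ξ i)‖^2 := by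
          field_simp
  -- integrability of R and the integral decomposition of the LHS
  have hRmeas : AEStronglyMeasurable R (Measure.pi μ) := by
    have hc : Continuous fun y : EuclideanSpace ℝ (Fin d) => (n:ℝ)⁻¹ * ∑ i, f i y :=
      hFdiff.continuous
    have h1 : Measurable fun ξ => xb - η • S ξ := measurable_const.sub (hSmeas.const_smul η)
    exact (((hc.measurable.comp h1).sub measurable_const).add
      ((measurable_const.inner hSmeas).const_mul η)).aestronglyMeasurable
  have hRint : Integrable R (Measure.pi μ) := by
    refine Integrable.mono' (hSsq_int.const_mul (L / 2 * η ^ 2)) hRmeas ?_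
    refine Filter.Eventually.of_forall fun ξ => ?_
    rw [Real.norm_eq_abs]
    calc |R ξ| ≤ L / 2 * (η ^ 2 * ‖S ξ‖ ^ 2) := hdesc ξ
      _ = L / 2 * η ^ 2 * ‖S ξ‖ ^ 2 := by ring
  have hLHS : (fun ξ : ∀ k, Ξ k => (n : ℝ)⁻¹ * ∑ i, f i
        (xb - (η / n) • ∑ i, G i (x i) (ξ i)))
      = fun ξ => (n : ℝ)⁻¹ * ∑ i, f i xb + (R ξ - η * (inner ℝ gb (S ξ) : ℝ)) := by
    funext ξ
    have hupd : ((η : ℝ) / n) • ∑ i, G i (x i) (ξ i) = η • S ξ := by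
      rw [hSdef, smul_smul, div_eq_mul_inv]
    rw [hupd, hRdef]
    ring
  have hIeq : ∫ ξ, (n : ℝ)⁻¹ * ∑ i, f i
        (xb - (η / n) • ∑ i, G i (x i) (ξ i)) ∂(Measure.pi μ)
      = (n : ℝ)⁻¹ * ∑ i, f i xb - η * (inner ℝ gb hb : ℝ)
        + ∫ ξ, R ξ ∂(Measure.pi μ) := by
    have hsub : Integrable (fun ξ => R ξ - η * (inner ℝ gb (S ξ) : ℝ)) (Measure.pi μ) :=
      hRint.sub ((hSinner_int gb).const_mul η)
    rw [hLHS, integral_add (integrable_const _) hsub,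
      integral_sub hRint ((hSinner_int gb).const_mul η),
      integral_const_mul η (fun a => (inner ℝ gb (S a) : ℝ)), hSinner_val gb, integral_const]
    simp [measure_univ]
    ring
  -- expansion of ‖S‖² around its mean hb
  have hSexp : ∀ ξ : ∀ k, Ξ k, ‖S ξ‖ ^ 2
      = ‖hb‖ ^ 2 + 2 * (inner ℝ hb (S ξ - hb) : ℝ) + ‖S ξ - hb‖ ^ 2 := by
    intro ξ
    have h : S ξ = hb + (S ξ - hb) := by abel
    conv_lhs => rw [h]
    rw [norm_add_sq_real]
  have hD : ∀ ξ : ∀ k, Ξ k, S ξ - hb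
      = (n:ℝ)⁻¹ • ∑ i, (G i (x i) (ξ i) - gradient (f i) (x i)) := by
    intro ξ
    simp only [hSdef, hhb, ← smul_sub, ← Finset.sum_sub_distrib]
  have hΔinner_int : ∀ (c : EuclideanSpace ℝ (Fin d)) i,
      Integrable (fun ξ : ∀ k, Ξ k =>
        (inner ℝ c (G i (x i) (ξ i) - gradient (f i) (x i)) : ℝ)) (Measure.pi μ) :=
    fun c i => aux_integrable_eval μ i (fun a => (inner ℝ c (G i (x i) a - gradient (f i) (x i)) : ℝ))
        ((hΔint i).const_inner c)
  have hΔinner_val : ∀ (c : EuclideanSpace ℝ (Fin d)) i,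
      ∫ ξ, (inner ℝ c (G i (x i) (ξ i) - gradient (f i) (x i)) : ℝ) ∂Measure.pi μ = 0 := by
    intro c i
    rw [aux_integral_eval μ i (fun a => (inner ℝ c (G i (x i) a - gradient (f i) (x i)) : ℝ))
        ((hΔint i).const_inner c).aestronglyMeasurable,
      integral_inner (hΔint i) c, hΔmean i, inner_zero_right]
  have hDinner_eq : (fun ξ => (inner ℝ hb (S ξ - hb) : ℝ))
      = fun ξ : ∀ k, Ξ k => (n:ℝ)⁻¹ *
          ∑ i, (inner ℝ hb (G i (x i) (ξ i) - gradient (f i) (x i)) : ℝ) := by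
    funext ξ
    rw [hD ξ, real_inner_smul_right, inner_sum]
  have hDin_int : Integrable (fun ξ => (inner ℝ hb (S ξ - hb) : ℝ)) (Measure.pi μ) := by
    rw [hDinner_eq]
    exact (integrable_finset_sum Finset.univ fun i _ => hΔinner_int hb i).const_mul _
  have hDin_val : ∫ ξ, (inner ℝ hb (S ξ - hb) : ℝ) ∂Measure.pi μ = 0 := by
    rw [hDinner_eq,
      integral_const_mul ((n:ℝ)⁻¹)
        (fun ξ : ∀ k, Ξ k => ∑ i, (inner ℝ hb (G i (x i) (ξ i) - gradient (f i) (x i)) : ℝ)),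
      integral_finset_sum Finset.univ fun i _ => hΔinner_int hb i,
      Finset.sum_eq_zero fun i _ => hΔinner_val hb i, mul_zero]
  -- coordinatewise facts
  have hproj_int : ∀ i (m : Fin d),
      Integrable (fun a => (G i (x i) a - gradient (f i) (x i)) m) (μ i) := fun i m =>
    (EuclideanSpace.proj m : EuclideanSpace ℝ (Fin d) →L[ℝ] ℝ).integrable_comp (hΔint i)
  have hproj_zero : ∀ i (m : Fin d),
      ∫ a, (G i (x i) a - gradient (f i) (x i)) m ∂μ i = 0 := by
    intro i m
    have h := (EuclideanSpace.proj m :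
      EuclideanSpace ℝ (Fin d) →L[ℝ] ℝ).integral_comp_comm (hΔint i)
    rw [hΔmean i] at h
    simpa using h
  have hinner_coord : ∀ (a b : EuclideanSpace ℝ (Fin d)),
      (inner ℝ a b : ℝ) = ∑ m : Fin d, a m * b m := by
    intro a b
    simp [PiLp.inner_apply, RCLike.inner_apply, conj_trivial]
    exact Finset.sum_congr rfl fun _ _ => mul_comm _ _
  -- cross terms
  have hT_int : ∀ i j, Integrable (fun ξ : ∀ k, Ξ k =>
      (inner ℝ (G i (x i) (ξ i) - gradient (f i) (x i))
        (G j (x j) (ξ j) - gradient (f j) (x j)) : ℝ)) (Measure.pi μ) := by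
    intro i j
    rcases eq_or_ne i j with rfl | hij
    · have he : (fun ξ : ∀ k, Ξ k =>
          (inner ℝ (G i (x i) (ξ i) - gradient (f i) (x i))
            (G i (x i) (ξ i) - gradient (f i) (x i)) : ℝ))
          = fun ξ => ‖G i (x i) (ξ i) - gradient (f i) (x i)‖ ^ 2 :=
        funext fun ξ => real_inner_self_eq_norm_sq _
      rw [he]
      exact aux_integrable_eval μ i _ (hΔsq i)
    · have he : (fun ξ : ∀ k, Ξ k =>
          (inner ℝ (G i (x i) (ξ i) - gradient (f i) (x i))
            (G j (x j) (ξ j) - gradient (f j) (x j)) : ℝ))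
          = fun ξ => ∑ m : Fin d, (G i (x i) (ξ i) - gradient (f i) (x i)) m
              * (G j (x j) (ξ j) - gradient (f j) (x j)) m :=
        funext fun ξ => hinner_coord _ _
      rw [he]
      exact integrable_finset_sum Finset.univ fun m _ =>
        aux_integrable_pair μ hij _ _ (hproj_int i m) (hproj_int j m)
  have hT_off : ∀ i j, i ≠ j → ∫ ξ, (inner ℝ (G i (x i) (ξ i) - gradient (f i) (x i))
      (G j (x j) (ξ j) - gradient (f j) (x j)) : ℝ) ∂Measure.pi μ = 0 := by
    intro i j hij
    have he : (fun ξ : ∀ k, Ξ k =>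
        (inner ℝ (G i (x i) (ξ i) - gradient (f i) (x i))
          (G j (x j) (ξ j) - gradient (f j) (x j)) : ℝ))
        = fun ξ => ∑ m : Fin d, (G i (x i) (ξ i) - gradient (f i) (x i)) m
            * (G j (x j) (ξ j) - gradient (f j) (x j)) m :=
      funext fun ξ => hinner_coord _ _
    rw [he, integral_finset_sum Finset.univ fun m _ =>
      aux_integrable_pair μ hij _ _ (hproj_int i m) (hproj_int j m)]
    refine Finset.sum_eq_zero fun m _ => ?_
    rw [aux_integral_pair μ hij _ _ (hproj_int i m) (hproj_int j m), hproj_zero i m, zero_mul]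
  have hT_diag : ∀ i, ∫ ξ, (inner ℝ (G i (x i) (ξ i) - gradient (f i) (x i))
      (G i (x i) (ξ i) - gradient (f i) (x i)) : ℝ) ∂Measure.pi μ ≤ σ i ^ 2 := by
    intro i
    have he : (fun ξ : ∀ k, Ξ k =>
        (inner ℝ (G i (x i) (ξ i) - gradient (f i) (x i))
          (G i (x i) (ξ i) - gradient (f i) (x i)) : ℝ))
        = fun ξ => ‖G i (x i) (ξ i) - gradient (f i) (x i)‖ ^ 2 :=
      funext fun ξ => real_inner_self_eq_norm_sq _
    rw [he, aux_integral_eval μ i _ (hΔsq i).aestronglyMeasurable]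
    exact hvar i (x i)
  -- the variance bound
  have hDsq_eq : (fun ξ : ∀ k, Ξ k => ‖S ξ - hb‖ ^ 2)
      = fun ξ => ((n:ℝ)⁻¹) ^ 2 * ∑ i, ∑ j,
          (inner ℝ (G i (x i) (ξ i) - gradient (f i) (x i))
            (G j (x j) (ξ j) - gradient (f j) (x j)) : ℝ) := by
    funext ξ
    rw [hD ξ, norm_smul, mul_pow, Real.norm_eq_abs, sq_abs]
    congr 1
    rw [← real_inner_self_eq_norm_sq, sum_inner]
    exact Finset.sum_congr rfl fun i _ => inner_sum _ _ _
  have hDsq_int : Integrable (fun ξ => ‖S ξ - hb‖ ^ 2) (Measure.pi μ) := by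
    rw [hDsq_eq]
    exact (integrable_finset_sum Finset.univ fun i _ =>
      integrable_finset_sum Finset.univ fun j _ => hT_int i j).const_mul _
  have hDsq_val : ∫ ξ, ‖S ξ - hb‖ ^ 2 ∂Measure.pi μ
      ≤ (n:ℝ)⁻¹ * ((n:ℝ)⁻¹ * ∑ i, σ i ^ 2) := by
    rw [hDsq_eq,
      integral_const_mul (((n:ℝ)⁻¹) ^ 2)
        (fun ξ : ∀ k, Ξ k => ∑ i, ∑ j,
          (inner ℝ (G i (x i) (ξ i) - gradient (f i) (x i))
            (G j (x j) (ξ j) - gradient (f j) (x j)) : ℝ)),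
      integral_finset_sum Finset.univ fun i _ =>
        integrable_finset_sum Finset.univ fun j _ => hT_int i j]
    have hrow : ∀ i : Fin n,
        ∫ ξ, ∑ j, (inner ℝ (G i (x i) (ξ i) - gradient (f i) (x i))
          (G j (x j) (ξ j) - gradient (f j) (x j)) : ℝ) ∂Measure.pi μ ≤ σ i ^ 2 := by
      intro i
      rw [integral_finset_sum Finset.univ fun j _ => hT_int i j]
      rw [Finset.sum_eq_single_of_mem i (Finset.mem_univ i)
        (fun j _ hji => hT_off i j (Ne.symm hji))]
      exact hT_diag i
    calc ((n:ℝ)⁻¹) ^ 2 * ∑ i, ∫ ξ, ∑ j, (inner ℝ (G i (x i) (ξ i) - gradient (f i) (x i))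
          (G j (x j) (ξ j) - gradient (f j) (x j)) : ℝ) ∂Measure.pi μ
        ≤ ((n:ℝ)⁻¹) ^ 2 * ∑ i, σ i ^ 2 :=
          mul_le_mul_of_nonneg_left (Finset.sum_le_sum fun i _ => hrow i) (by positivity)
      _ = (n:ℝ)⁻¹ * ((n:ℝ)⁻¹ * ∑ i, σ i ^ 2) := by ring
  have hSsq_val : ∫ ξ, ‖S ξ‖ ^ 2 ∂Measure.pi μ
      ≤ ‖hb‖ ^ 2 + (n:ℝ)⁻¹ * ((n:ℝ)⁻¹ * ∑ i, σ i ^ 2) := by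
    have he : (fun ξ : ∀ k, Ξ k => ‖S ξ‖ ^ 2)
        = fun ξ => (‖hb‖ ^ 2 + 2 * (inner ℝ hb (S ξ - hb) : ℝ)) + ‖S ξ - hb‖ ^ 2 :=
      funext fun ξ => by rw [hSexp ξ]
    have hadd1 : Integrable (fun ξ : ∀ k, Ξ k =>
        ‖hb‖ ^ 2 + 2 * (inner ℝ hb (S ξ - hb) : ℝ)) (Measure.pi μ) :=
      (integrable_const _).add (hDin_int.const_mul 2)
    rw [he, integral_add hadd1 hDsq_int, integral_add (integrable_const _) (hDin_int.const_mul 2),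
      integral_const_mul 2 (fun ξ => (inner ℝ hb (S ξ - hb) : ℝ)), hDin_val, integral_const]
    simp only [measure_univ, probReal_univ, ENNReal.toReal_one, smul_eq_mul, one_mul, mul_zero, add_zero]
    linarith [hDsq_val]
  -- deterministic estimates
  have hgb_eq : gb = (n:ℝ)⁻¹ • ∑ i, gradient (f i) xb := by rw [hgb, hgradF]
  have he_sq : ‖hb - gb‖ ^ 2 ≤ L ^ 2 * ((n:ℝ)⁻¹ * ∑ i, ‖xb - x i‖ ^ 2) := by
    have he1 : hb - gb = (n:ℝ)⁻¹ • ∑ i, (gradient (f i) (x i) - gradient (f i) xb) := by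
      rw [hhb, hgb_eq, ← smul_sub, ← Finset.sum_sub_distrib]
    rw [he1, norm_smul, mul_pow, Real.norm_eq_abs, sq_abs]
    have h2 := aux_norm_sum_sq Finset.univ (fun i => gradient (f i) (x i) - gradient (f i) xb)
    rw [Finset.card_univ, Fintype.card_fin] at h2
    have h3 : ∑ i : Fin n, ‖gradient (f i) (x i) - gradient (f i) xb‖ ^ 2
        ≤ ∑ i : Fin n, L ^ 2 * ‖xb - x i‖ ^ 2 := by
      refine Finset.sum_le_sum fun i _ => ?_
      have h4 := hsmooth i xb (x i)
      rw [norm_sub_rev (x i) xb] at h4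
      nlinarith [norm_nonneg (gradient (f i) (x i) - gradient (f i) xb),
        norm_nonneg (xb - x i), mul_nonneg hL (norm_nonneg (xb - x i))]
    calc ((n:ℝ)⁻¹) ^ 2 * ‖∑ i, (gradient (f i) (x i) - gradient (f i) xb)‖ ^ 2
        ≤ ((n:ℝ)⁻¹) ^ 2 * ((n:ℝ) * ∑ i, L ^ 2 * ‖xb - x i‖ ^ 2) := by
          refine mul_le_mul_of_nonneg_left (h2.trans ?_) (by positivity)
          exact mul_le_mul_of_nonneg_left h3 (by positivity)
      _ = L ^ 2 * ((n:ℝ)⁻¹ * ∑ i, ‖xb - x i‖ ^ 2) := by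
          rw [← Finset.mul_sum]
          field_simp
  have hA : ‖gb‖ ^ 2 / 2 - ‖hb - gb‖ ^ 2 / 2 ≤ (inner ℝ gb hb : ℝ) := by
    have h1 : hb = gb + (hb - gb) := by abel
    have h2 : (inner ℝ gb hb : ℝ) = ‖gb‖ ^ 2 + (inner ℝ gb (hb - gb) : ℝ) := by
      conv_lhs => rw [h1]
      rw [inner_add_right, real_inner_self_eq_norm_sq]
    have h3 := abs_real_inner_le_norm gb (hb - gb)
    have h4 := neg_abs_le (inner ℝ gb (hb - gb) : ℝ)
    nlinarith [sq_nonneg (‖gb‖ - ‖hb - gb‖)]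
  have hB : ‖hb‖ ^ 2 ≤ 2 * ‖gb‖ ^ 2 + 2 * ‖hb - gb‖ ^ 2 := by
    have h1 : hb = gb + (hb - gb) := by abel
    have h2 : ‖hb‖ ≤ ‖gb‖ + ‖hb - gb‖ := by
      conv_lhs => rw [h1]
      exact norm_add_le _ _
    nlinarith [norm_nonneg hb, norm_nonneg gb, norm_nonneg (hb - gb),
      sq_nonneg (‖gb‖ - ‖hb - gb‖), sq_nonneg (‖gb‖ + ‖hb - gb‖)]
  -- bound on the integral of R
  have hLη2 : (0:ℝ) ≤ L / 2 * η ^ 2 :=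
    mul_nonneg (div_nonneg hL (by norm_num)) (sq_nonneg η)
  have hRval : ∫ ξ, R ξ ∂Measure.pi μ
      ≤ L / 2 * η ^ 2 * (‖hb‖ ^ 2 + (n:ℝ)⁻¹ * ((n:ℝ)⁻¹ * ∑ i, σ i ^ 2)) := by
    have h1 : ∫ ξ, R ξ ∂Measure.pi μ
        ≤ ∫ ξ, L / 2 * η ^ 2 * ‖S ξ‖ ^ 2 ∂Measure.pi μ := by
      refine integral_mono hRint (hSsq_int.const_mul _) fun ξ => ?_
      calc R ξ ≤ |R ξ| := le_abs_self _
        _ ≤ L / 2 * (η ^ 2 * ‖S ξ‖ ^ 2) := hdesc ξ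
        _ = L / 2 * η ^ 2 * ‖S ξ‖ ^ 2 := by ring
    rw [integral_const_mul (L / 2 * η ^ 2) (fun ξ => ‖S ξ‖ ^ 2)] at h1
    exact h1.trans (mul_le_mul_of_nonneg_left hSsq_val hLη2)
  -- final assembly
  rw [hIeq]
  have hfinal_term : L * η ^ 2 * ((n:ℝ)⁻¹ * ∑ i, σ i ^ 2) / (2 * n)
      = L / 2 * η ^ 2 * ((n:ℝ)⁻¹ * ((n:ℝ)⁻¹ * ∑ i, σ i ^ 2)) := by
    rw [div_eq_mul_inv, mul_inv]
    ring
  rw [hfinal_term]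
  have hc1 : (0:ℝ) ≤ η / 2 + L * η ^ 2 :=
    add_nonneg (div_nonneg hη.le (by norm_num)) (mul_nonneg hL (sq_nonneg η))
  have f1 : η * (‖gb‖ ^ 2 / 2 - ‖hb - gb‖ ^ 2 / 2) ≤ η * (inner ℝ gb hb : ℝ) :=
    mul_le_mul_of_nonneg_left hA hη.le
  have f2 : ∫ ξ, R ξ ∂Measure.pi μ
      ≤ L / 2 * η ^ 2 * ((2 * ‖gb‖ ^ 2 + 2 * ‖hb - gb‖ ^ 2)
        + (n:ℝ)⁻¹ * ((n:ℝ)⁻¹ * ∑ i, σ i ^ 2)) :=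
    hRval.trans (mul_le_mul_of_nonneg_left (by linarith) hLη2)
  have f3 : (η / 2 + L * η ^ 2) * ‖hb - gb‖ ^ 2
      ≤ (η / 2 + L * η ^ 2) * (L ^ 2 * ((n:ℝ)⁻¹ * ∑ i, ‖xb - x i‖ ^ 2)) :=
    mul_le_mul_of_nonneg_left he_sq hc1
  nlinarith [f1, f2, f3]
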